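/- For a traceless complex 2×2 matrix A, the following are equivalent: (1) A is normal (i.e., AA* = A*A); (2) tr(AA*) = 2|det(A)|; (3) AA* = |det(A)|·I. -/

import Mathlib

open Matrix


lemma aux21 (a b c : ℂ)
    (h : 2*(‖a‖)^2 + (‖b‖)^2 + (‖c‖)^2
        = 2 * ‖a^2 + b*c‖) :
    ‖b‖ = ‖c‖ ∧ a * (starRingEnd ℂ) c = (starRingEnd ℂ) a * b := by
  set α := ‖a‖ with hα
  set β := ‖b‖ with hβ
  set γ := ‖c‖ with hγ
  have hα0 : 0 ≤ α := norm_nonneg a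
  have hβ0 : 0 ≤ β := norm_nonneg b
  have hγ0 : 0 ≤ γ := norm_nonneg c
  set R := (a^2 * (starRingEnd ℂ) (b*c)).re with hR
  set D := ‖a^2 + b*c‖ with hDdef
  have hR1 : R ≤ α^2 * (β*γ) := by
    calc R ≤ ‖a^2 * (starRingEnd ℂ) (b*c)‖ := Complex.re_le_norm _
    _ = α^2*(β*γ) := by
        rw [norm_mul, Complex.norm_conj, norm_mul, norm_pow]
  have hsq : D^2 = α^4 + 2*R + (β*γ)^2 := by
    rw [hDdef, Complex.sq_norm, Complex.normSq_add, ← Complex.sq_norm (a^2),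
      ← Complex.sq_norm (b*c), norm_mul, norm_pow]
    ring
  have hD : D = α^2 + (β^2+γ^2)/2 := by linarith
  rw [hD] at hsq
  have hbc : β = γ := by
    have h2 : (β^2 - γ^2) = 0 := by
      nlinarith [sq_nonneg (β - γ), sq_nonneg (β*β - γ*γ), mul_nonneg (mul_nonneg hα0 hα0) (sq_nonneg (β - γ))]
    nlinarith [sq_nonneg (β - γ)]
  rw [← hbc] at hsq
  have hReq : R = α^2 * β^2 := by nlinarith [hsq]
  refine ⟨hbc, ?_⟩
  have hz : Complex.normSq (a * (starRingEnd ℂ) c - (starRingEnd ℂ) a * b) = 0 := by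
    rw [Complex.normSq_sub]
    have e1 : (a * (starRingEnd ℂ) c) * (starRingEnd ℂ) ((starRingEnd ℂ) a * b) = a^2 * (starRingEnd ℂ) (b*c) := by
      simp only [_root_.map_mul, Complex.conj_conj]
      ring
    rw [e1]
    have e2 : Complex.normSq (a * (starRingEnd ℂ) c) = α^2 * γ^2 := by
      rw [← Complex.sq_norm, norm_mul, Complex.norm_conj]; ring
    have e3 : Complex.normSq ((starRingEnd ℂ) a * b) = α^2 * β^2 := by
      rw [← Complex.sq_norm, norm_mul, Complex.norm_conj]; ring
    rw [e2, e3, ← hR, hReq, hbc]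
    ring
  exact sub_eq_zero.mp (Complex.normSq_eq_zero.mp hz)

lemma aux13 (a b c : ℂ) (hb : ‖b‖ = ‖c‖)
    (h2 : a * (starRingEnd ℂ) c = (starRingEnd ℂ) a * b) :
    ‖a^2 + b*c‖ = (‖a‖)^2 + (‖b‖)^2 := by
  have key : a^2 * (starRingEnd ℂ) (b*c) = ((Complex.normSq a * Complex.normSq b : ℝ) : ℂ) := by
    have h3 : (starRingEnd ℂ) a * c = a * (starRingEnd ℂ) b := by
      have := congrArg (starRingEnd ℂ) h2
      simpa [_root_.map_mul, Complex.conj_conj, mul_comm] using this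
    push_cast
    rw [← Complex.mul_conj, ← Complex.mul_conj]
    simp only [_root_.map_mul]
    linear_combination (a * (starRingEnd ℂ) b) * h2
  have hsq : (‖a^2+b*c‖)^2 = ((‖a‖)^2 + (‖b‖)^2)^2 := by
    rw [Complex.sq_norm, Complex.normSq_add, key, Complex.ofReal_re]
    simp only [Complex.normSq_eq_norm_sq, norm_mul, norm_pow, hb]
    ring
  have h1 := norm_nonneg (a^2+b*c)
  nlinarith [norm_nonneg a, norm_nonneg b, sq_nonneg (‖a‖), sq_nonneg (‖b‖)]

/-- For a traceless complex 2×2 matrix `A`, the following are equivalent: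
(1) `A` is normal, i.e. `AAᴴ = AᴴA`;
(2) `tr(AAᴴ) = 2|det A|`;
(3) `AAᴴ = |det A|·I`. -/
theorem sl2_normal_tfae (A : Matrix (Fin 2) (Fin 2) ℂ)
    (hA : Matrix.trace A = 0) :
    (A * Aᴴ = Aᴴ * A ↔ Matrix.trace (A * Aᴴ) = ((2 * ‖Matrix.det A‖ : ℝ) : ℂ)) ∧
    (A * Aᴴ = Aᴴ * A ↔
      A * Aᴴ = ((‖Matrix.det A‖ : ℂ)) • (1 : Matrix (Fin 2) (Fin 2) ℂ)) := by
  have h0 : A 0 0 + A 1 1 = 0 := by rw [← Matrix.trace_fin_two A, hA]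
  have hd : A 1 1 = -A 0 0 := by linear_combination h0
  have hdet : ‖A.det‖ = ‖(A 0 0)^2 + A 0 1 * A 1 0‖ := by
    rw [Matrix.det_fin_two, hd,
      show A 0 0 * -A 0 0 - A 0 1 * A 1 0 = -((A 0 0)^2 + A 0 1 * A 1 0) from by ring,
      norm_neg]
  have ha' : A 0 0 * (starRingEnd ℂ) (A 0 0) = (((‖A 0 0‖)^2 : ℝ) : ℂ) := by
    rw [Complex.mul_conj]; norm_cast; rw [Complex.sq_norm]
  have hb' : A 0 1 * (starRingEnd ℂ) (A 0 1) = (((‖A 0 1‖)^2 : ℝ) : ℂ) := by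
    rw [Complex.mul_conj]; norm_cast; rw [Complex.sq_norm]
  have hc' : A 1 0 * (starRingEnd ℂ) (A 1 0) = (((‖A 1 0‖)^2 : ℝ) : ℂ) := by
    rw [Complex.mul_conj]; norm_cast; rw [Complex.sq_norm]
  -- scalar characterization of normality
  have hnorm_iff : (A * Aᴴ = Aᴴ * A) ↔
      (‖A 0 1‖ = ‖A 1 0‖ ∧
        A 0 0 * (starRingEnd ℂ) (A 1 0) = (starRingEnd ℂ) (A 0 0) * A 0 1) := by
    constructor
    · intro h
      have e00 := congrFun (congrFun h 0) 0
      have e01 := congrFun (congrFun h 0) 1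
      simp only [Matrix.mul_apply, Matrix.conjTranspose_apply, Fin.sum_univ_two, hd,
        Complex.star_def, map_neg, neg_mul, mul_neg] at e00 e01
      constructor
      · have hbb : A 0 1 * (starRingEnd ℂ) (A 0 1) = A 1 0 * (starRingEnd ℂ) (A 1 0) := by
          linear_combination e00
        rw [hb', hc'] at hbb
        have h2 := Complex.ofReal_inj.mp hbb
        nlinarith [norm_nonneg (A 0 1), norm_nonneg (A 1 0)]
      · linear_combination e01 / 2
    · rintro ⟨h1, h2⟩
      have hbb : A 0 1 * (starRingEnd ℂ) (A 0 1) = A 1 0 * (starRingEnd ℂ) (A 1 0) := by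
        rw [hb', hc', h1]
      have h2' : (starRingEnd ℂ) (A 0 0) * A 1 0 = A 0 0 * (starRingEnd ℂ) (A 0 1) := by
        have := congrArg (starRingEnd ℂ) h2
        simpa [_root_.map_mul, Complex.conj_conj, mul_comm] using this
      ext i j
      fin_cases i <;> fin_cases j <;>
        simp only [Fin.zero_eta, Fin.mk_one, Fin.isValue, Matrix.mul_apply,
          Matrix.conjTranspose_apply, Fin.sum_univ_two, hd, Complex.star_def,
          map_neg, neg_mul, mul_neg] <;>
      first
        | linear_combination hbb
        | linear_combination 2 * h2
        | linear_combination 2 * h2'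
        | linear_combination -hbb
  -- (1) → (3)
  have h13 : (A * Aᴴ = Aᴴ * A) →
      A * Aᴴ = ((‖Matrix.det A‖ : ℂ)) • (1 : Matrix (Fin 2) (Fin 2) ℂ) := by
    intro h
    obtain ⟨h1, h2⟩ := hnorm_iff.mp h
    have hD := aux13 (A 0 0) (A 0 1) (A 1 0) h1 h2
    have h2' : (starRingEnd ℂ) (A 0 0) * A 1 0 = A 0 0 * (starRingEnd ℂ) (A 0 1) := by
      have := congrArg (starRingEnd ℂ) h2
      simpa [_root_.map_mul, Complex.conj_conj, mul_comm] using this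
    have hcc : A 1 0 * (starRingEnd ℂ) (A 1 0) = (((‖A 0 1‖)^2 : ℝ) : ℂ) := by
      rw [hc', h1]
    ext i j
    fin_cases i <;> fin_cases j
    · simp only [Fin.zero_eta, Fin.mk_one, Fin.isValue, Matrix.mul_apply,
        Matrix.conjTranspose_apply, Fin.sum_univ_two, hd, Complex.star_def,
        map_neg, neg_mul, mul_neg, Matrix.smul_apply, Matrix.one_apply,
        smul_eq_mul, hdet, hD, mul_one, mul_zero]
      norm_num
      rw [ha', hb']; push_cast; ring
    · simp only [Fin.zero_eta, Fin.mk_one, Fin.isValue, Matrix.mul_apply,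
        Matrix.conjTranspose_apply, Fin.sum_univ_two, hd, Complex.star_def,
        map_neg, neg_mul, mul_neg, Matrix.smul_apply, Matrix.one_apply,
        smul_eq_mul, hdet, hD, mul_one, mul_zero]
      norm_num
      linear_combination h2
    · simp only [Fin.zero_eta, Fin.mk_one, Fin.isValue, Matrix.mul_apply,
        Matrix.conjTranspose_apply, Fin.sum_univ_two, hd, Complex.star_def,
        map_neg, neg_mul, mul_neg, Matrix.smul_apply, Matrix.one_apply,
        smul_eq_mul, hdet, hD, mul_one, mul_zero]
      norm_num
      linear_combination h2'
    · simp only [Fin.zero_eta, Fin.mk_one, Fin.isValue, Matrix.mul_apply,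
        Matrix.conjTranspose_apply, Fin.sum_univ_two, hd, Complex.star_def,
        map_neg, neg_mul, mul_neg, Matrix.smul_apply, Matrix.one_apply,
        smul_eq_mul, hdet, hD, mul_one, mul_zero]
      norm_num
      rw [hcc, ha']
      push_cast
      ring
  -- (3) → (2)
  have h32 : (A * Aᴴ = ((‖Matrix.det A‖ : ℂ)) • (1 : Matrix (Fin 2) (Fin 2) ℂ)) →
      Matrix.trace (A * Aᴴ) = ((2 * ‖Matrix.det A‖ : ℝ) : ℂ) := by
    intro h
    rw [h, Matrix.trace_smul, Matrix.trace_one]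
    simp only [Fintype.card_fin, smul_eq_mul]
    push_cast
    ring
  -- (2) → (1)
  have h21 : Matrix.trace (A * Aᴴ) = ((2 * ‖Matrix.det A‖ : ℝ) : ℂ) →
      (A * Aᴴ = Aᴴ * A) := by
    intro h
    have hna : (-A 0 0) * (starRingEnd ℂ) (-A 0 0) = (((‖A 0 0‖)^2 : ℝ) : ℂ) := by
      rw [map_neg]; linear_combination ha'
    have htr : Matrix.trace (A * Aᴴ) =
        ((2*(‖A 0 0‖)^2 + (‖A 0 1‖)^2 + (‖A 1 0‖)^2 : ℝ) : ℂ) := by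
      rw [Matrix.trace_fin_two]
      simp only [Matrix.mul_apply, Matrix.conjTranspose_apply, Fin.sum_univ_two, hd,
        Complex.star_def]
      rw [ha', hb', hc', hna]
      push_cast
      ring
    rw [htr, hdet] at h
    have hre := Complex.ofReal_inj.mp h
    obtain ⟨h1, h2⟩ := aux21 (A 0 0) (A 0 1) (A 1 0) hre
    exact hnorm_iff.mpr ⟨h1, h2⟩
  exact ⟨⟨fun h => h32 (h13 h), h21⟩, ⟨h13, fun h => h21 (h32 h)⟩⟩
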